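/- arXiv:1611.09157 — 3 statements merged into one kernel-verified Lean document; each statement's English description precedes it below -/
import Mathlib

section
/- Let a > 0, α < 1, η ∈ ℂ with Re(η) > 0, and β ∈ ℂ with Re(β) > 0 and Re(η/(1−α)) > −1. Then for x > 0 the pathway fractional integral of the power function t^{β−1} satisfies (P^{(η,α)}_{0+}[t^{β−1}])(x) = x^{η+β} / (a(1−α))^β · Γ(β) Γ(1 + η/(1−α)) / Γ(1 + η/(1−α) + β). -/
open Complex Real

/-- The k-gamma function: `Γ_k(γ) = k^(γ/k - 1) Γ(γ/k)`. -/
noncomputable def kGamma (k : ℝ) (γ : ℂ) : ℂ :=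
  (k : ℂ) ^ (γ / (k : ℂ) - 1) * Complex.Gamma (γ / (k : ℂ))

/-- The k-Struve function `S^k_{ν,c}(x)`. -/
noncomputable def kStruve (k : ℝ) (ν c : ℂ) (x : ℝ) : ℂ :=
  ∑' r : ℕ, (-c) ^ r /
      (kGamma k ((r : ℂ) * (k : ℂ) + ν + 3 * (k : ℂ) / 2) * Complex.Gamma ((r : ℂ) + 3 / 2)) *
    ((x : ℂ) / 2) ^ (2 * (r : ℂ) + ν / (k : ℂ) + 1)

/-- The pathway fractional integral operator `P^{(η,α)}_{0+}`. -/
noncomputable def pathway (a α : ℝ) (η : ℂ) (f : ℝ → ℂ) (x : ℝ) : ℂ :=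
  (x : ℂ) ^ η *
    ∫ t in (0 : ℝ)..(x / (a * (1 - α))),
      ((1 - a * (1 - α) * t / x : ℝ) : ℂ) ^ (η / (1 - (α : ℂ))) * f t

/-- The generalized (Fox–)Wright function `_pΨ_q`. -/
noncomputable def foxWright {p q : ℕ} (a : Fin p → ℂ × ℂ) (b : Fin q → ℂ × ℂ) (z : ℂ) : ℂ :=
  ∑' n : ℕ,
    ((∏ i, Complex.Gamma ((a i).1 + (a i).2 * (n : ℂ))) /
      (∏ j, Complex.Gamma ((b j).1 + (b j).2 * (n : ℂ)))) * z ^ n / (n.factorial : ℂ)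


theorem pathway_power_aux (a α : ℝ) (η β : ℂ) (ha : 0 < a) (hα : α < 1)
    (hη : 0 < η.re) (hβ : 0 < β.re) (hηα : -1 < (η / (1 - (α : ℂ))).re)
    (x : ℝ) (hx : 0 < x) :
    (x : ℂ) ^ η *
    (∫ t in (0 : ℝ)..(x / (a * (1 - α))),
      ((1 - a * (1 - α) * t / x : ℝ) : ℂ) ^ (η / (1 - (α : ℂ))) * (t : ℂ) ^ (β - 1)) =
      (x : ℂ) ^ (η + β) / ((a * (1 - α) : ℝ) : ℂ) ^ β *
        (Complex.Gamma β * Complex.Gamma (1 + η / (1 - (α : ℂ))) /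
          Complex.Gamma (1 + η / (1 - (α : ℂ)) + β)) := by
  have hd : 0 < a * (1 - α) := mul_pos ha (by linarith)
  set d : ℝ := a * (1 - α) with hdd
  set μ : ℂ := η / (1 - (α : ℂ)) with hμ
  have hc : 0 < x / d := div_pos hx hd
  set c : ℝ := x / d with hcc
  have sub : (∫ s in (0:ℝ)..(1:ℝ),
        ((1 - d * (c * s) / x : ℝ) : ℂ) ^ μ * ((c * s : ℝ) : ℂ) ^ (β - 1))
      = c⁻¹ • ∫ t in (c * 0)..(c * 1),
        ((1 - d * t / x : ℝ) : ℂ) ^ μ * ((t : ℝ) : ℂ) ^ (β - 1) :=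
    intervalIntegral.integral_comp_mul_left
      (fun t => ((1 - d * t / x : ℝ) : ℂ) ^ μ * ((t : ℝ) : ℂ) ^ (β - 1)) hc.ne'
  rw [mul_zero, mul_one] at sub
  have hint : ∫ t in (0:ℝ)..c, ((1 - d * t / x : ℝ) : ℂ) ^ μ * (t : ℂ) ^ (β - 1)
      = c • ∫ s in (0:ℝ)..(1:ℝ),
        ((1 - d * (c * s) / x : ℝ) : ℂ) ^ μ * ((c * s : ℝ) : ℂ) ^ (β - 1) := by
    rw [sub, smul_smul, mul_inv_cancel₀ hc.ne', one_smul]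
  have heq : Set.EqOn (fun s : ℝ => ((1 - d * (c * s) / x : ℝ) : ℂ) ^ μ * ((c * s : ℝ) : ℂ) ^ (β - 1))
      (fun s : ℝ => (c : ℂ) ^ (β - 1) * ((s : ℂ) ^ (β - 1) * (1 - (s : ℂ)) ^ ((μ + 1) - 1)))
      (Set.uIcc 0 1) := by
    intro s hs
    rw [Set.uIcc_of_le zero_le_one] at hs
    have h1 : d * (c * s) / x = s := by rw [hcc]; field_simp [hd.ne', hx.ne']
    have h2 : ((c * s : ℝ) : ℂ) ^ (β - 1) = (c : ℂ) ^ (β - 1) * (s : ℂ) ^ (β - 1) := by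
      rw [Complex.ofReal_mul]; exact mul_cpow_ofReal_nonneg hc.le hs.1 _
    simp only [h1, h2, add_sub_cancel_right]
    push_cast
    ring
  have hbeta : ∫ s in (0:ℝ)..(1:ℝ),
        ((1 - d * (c * s) / x : ℝ) : ℂ) ^ μ * ((c * s : ℝ) : ℂ) ^ (β - 1)
      = (c : ℂ) ^ (β - 1) * betaIntegral β (μ + 1) := by
    rw [intervalIntegral.integral_congr heq, intervalIntegral.integral_const_mul]
    rfl
  have hμ1 : 0 < (μ + 1).re := by
    simp only [Complex.add_re, Complex.one_re]; linarith
  have hne : Complex.Gamma (β + (μ + 1)) ≠ 0 :=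
    Complex.Gamma_ne_zero_of_re_pos (by simp only [Complex.add_re, Complex.one_re]; linarith)
  have hB : betaIntegral β (μ + 1) =
      Complex.Gamma β * Complex.Gamma (μ + 1) / Complex.Gamma (β + (μ + 1)) := by
    rw [Complex.Gamma_mul_Gamma_eq_betaIntegral hβ hμ1, mul_comm, mul_div_assoc,
      div_self hne, mul_one]
  rw [hint, hbeta, hB, Complex.real_smul]
  have hc0 : ((c : ℝ) : ℂ) ≠ 0 := Complex.ofReal_ne_zero.mpr hc.ne'
  have hcb : (c : ℂ) * (c : ℂ) ^ (β - 1) = (x : ℂ) ^ β / ((d : ℝ) : ℂ) ^ β := by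
    rw [Complex.cpow_sub _ _ hc0, Complex.cpow_one, mul_div_cancel₀ _ hc0]
    have : ((c : ℝ) : ℂ) ^ β = ((x * d⁻¹ : ℝ) : ℂ) ^ β := by rw [hcc, div_eq_mul_inv]
    rw [this, Complex.ofReal_mul, mul_cpow_ofReal_nonneg hx.le (inv_nonneg.mpr hd.le),
      Complex.ofReal_inv,
      Complex.inv_cpow _ _ (by rw [Complex.arg_ofReal_of_nonneg hd.le]; exact Real.pi_ne_zero.symm),
      div_eq_mul_inv]
  have hxs : (x : ℂ) ^ (η + β) = (x : ℂ) ^ η * (x : ℂ) ^ β :=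
    Complex.cpow_add _ _ (Complex.ofReal_ne_zero.mpr hx.ne')
  have hG1 : Complex.Gamma (μ + 1) = Complex.Gamma (1 + μ) := by rw [add_comm]
  have hG2 : Complex.Gamma (β + (μ + 1)) = Complex.Gamma (1 + μ + β) := by ring_nf
  rw [hxs, hG1, hG2]
  linear_combination (x : ℂ) ^ η * (Complex.Gamma β * Complex.Gamma (1 + μ) /
    Complex.Gamma (1 + μ + β)) * hcb

theorem pathway_power (a α : ℝ) (η β : ℂ) (ha : 0 < a) (hα : α < 1)
    (hη : 0 < η.re) (hβ : 0 < β.re) (hηα : -1 < (η / (1 - (α : ℂ))).re)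
    (x : ℝ) (hx : 0 < x) :
    pathway a α η (fun t => (t : ℂ) ^ (β - 1)) x =
      (x : ℂ) ^ (η + β) / ((a * (1 - α) : ℝ) : ℂ) ^ β *
        (Complex.Gamma β * Complex.Gamma (1 + η / (1 - (α : ℂ))) /
          Complex.Gamma (1 + η / (1 - (α : ℂ)) + β)) := by
  unfold pathway
  exact pathway_power_aux a α η β ha hα hη hβ hηα x hx
end

section
/- Let k > 0 and α ∈ ℝ. Then for all x > 0, sin(αx/√k) = α √(πx/(2k)) · S^k_{−k/2, α²}(x). -/
open Complex Real

lemma auxGamma (r : ℕ) : Complex.Gamma ((r:ℂ) + 3/2) =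
    ((Real.sqrt π : ℝ):ℂ) * (2*r+2).factorial / (4^(r+1) * (r+1).factorial) := by
  induction r with
  | zero =>
    have h0 : ((0:ℕ):ℂ) + 3/2 = 1/2 + 1 := by norm_num
    have hsq : ((π:ℝ):ℂ) ^ (1/2 : ℂ) = ((Real.sqrt π : ℝ):ℂ) := by
      rw [show (1/2:ℂ) = ((1/2:ℝ):ℂ) by norm_num, ← Complex.ofReal_cpow Real.pi_pos.le]
      norm_num [Real.sqrt_eq_rpow, Real.rpow_natCast]
    rw [h0, Complex.Gamma_add_one _ (by norm_num), Complex.Gamma_one_half_eq, hsq]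
    norm_num [Nat.factorial]
    ring
  | succ n ih =>
    have hstep : ((n+1:ℕ):ℂ) + 3/2 = ((n:ℂ) + 3/2) + 1 := by push_cast; ring
    have hne : ((n:ℂ) + 3/2) ≠ 0 := by
      have h2 : ((n:ℂ) + 3/2) = (((n:ℝ) + 3/2 : ℝ):ℂ) := by push_cast; ring
      rw [h2, Complex.ofReal_ne_zero]
      positivity
    rw [hstep, Complex.Gamma_add_one _ hne, ih]
    have h1 : (2*(n+1)+2).factorial = (2*n+4) * ((2*n+3) * (2*n+2).factorial) := by
      have : 2*(n+1)+2 = (2*n+3)+1 := by ring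
      rw [this, Nat.factorial_succ, show 2*n+3 = (2*n+2)+1 by ring, Nat.factorial_succ]
    have h2 : ((n+1)+1).factorial = (n+2) * (n+1).factorial := by
      rw [Nat.factorial_succ]
    rw [h1, h2]
    have hf1 : ((2*n+2).factorial : ℂ) ≠ 0 := by exact_mod_cast (Nat.factorial_pos _).ne'
    have hf2 : ((n+1).factorial : ℂ) ≠ 0 := by exact_mod_cast (Nat.factorial_pos _).ne'
    have hn2 : ((n:ℂ)+2) ≠ 0 := by
      have := Nat.cast_add_one_ne_zero (R := ℂ) (n+1)
      push_cast at this ⊢; rw [show ((n:ℂ)+2) = (n:ℂ)+1+1 by ring]; exact this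
    push_cast
    field_simp
    ring

theorem sin_eq_kStruve (k : ℝ) (hk : 0 < k) (α : ℝ) (x : ℝ) (hx : 0 < x) :
    ((Real.sin (α * x / Real.sqrt k) : ℝ) : ℂ) =
      (α : ℂ) * ((Real.sqrt (π * x / (2 * k)) : ℝ) : ℂ) *
        kStruve k (-((k : ℂ) / 2)) ((α : ℂ) ^ 2) x := by
  
  have hk0 : (k:ℂ) ≠ 0 := by exact_mod_cast hk.ne'
  have hx2 : (0:ℝ) ≤ x/2 := by linarith
  rw [Complex.ofReal_sin, Complex.sin_eq_tsum, kStruve, ← tsum_mul_left]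
  refine tsum_congr fun r => ?_
  have harg : (r:ℂ) * k + -((k:ℂ)/2) + 3*(k:ℂ)/2 = ((r:ℂ)+1) * k := by ring
  have hkg : kGamma k (((r:ℂ)+1)*k) = (k:ℂ)^r * r.factorial := by
    rw [kGamma, mul_div_cancel_right₀ _ hk0, show ((r:ℂ)+1) - 1 = ((r:ℕ):ℂ) by ring,
      Complex.cpow_natCast, show ((r:ℂ)+1) = ((r:ℕ):ℂ)+1 by norm_num,
      Complex.Gamma_nat_eq_factorial]
  have hexp : 2*(r:ℂ) + (-((k:ℂ)/2))/(k:ℂ) + 1 = ((2*r:ℕ):ℂ) + (1/2:ℂ) := by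
    push_cast
    field_simp
    ring
  have hxc : ((x:ℂ)/2) ≠ 0 := by
    simp only [div_ne_zero_iff]
    exact ⟨by exact_mod_cast hx.ne', two_ne_zero⟩
  have hpow : ((x:ℂ)/2) ^ (2*(r:ℂ) + (-((k:ℂ)/2))/(k:ℂ) + 1)
      = ((x:ℂ)/2)^(2*r) * ((Real.sqrt (x/2) : ℝ):ℂ) := by
    rw [hexp, Complex.cpow_add _ _ hxc, Complex.cpow_natCast]
    congr 1
    rw [show ((x:ℂ)/2) = ((x/2:ℝ):ℂ) by push_cast; ring,
        show (1/2:ℂ) = ((1/2:ℝ):ℂ) by norm_num, ← Complex.ofReal_cpow hx2]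
    norm_num [Real.sqrt_eq_rpow]
  rw [harg, hkg, auxGamma, hpow]
  -- sqrt decompositions
  have hS : Real.sqrt (π * x / (2*k)) = Real.sqrt π * Real.sqrt x / (Real.sqrt 2 * Real.sqrt k) := by
    rw [Real.sqrt_div (by positivity), Real.sqrt_mul Real.pi_pos.le, Real.sqrt_mul (by norm_num)]
  have hxh : Real.sqrt (x/2) = Real.sqrt x / Real.sqrt 2 := by
    rw [Real.sqrt_div hx.le]
  rw [hS, hxh]
  have hkk : (k:ℂ) = ((Real.sqrt k : ℝ):ℂ)^2 := by
    exact_mod_cast congrArg (Complex.ofReal) (Real.sq_sqrt hk.le).symm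
  have hxx : (x:ℂ) = ((Real.sqrt x : ℝ):ℂ)^2 := by
    exact_mod_cast congrArg (Complex.ofReal) (Real.sq_sqrt hx.le).symm
  have h22 : (2:ℂ) = ((Real.sqrt 2 : ℝ):ℂ)^2 := by
    exact_mod_cast congrArg (Complex.ofReal) (Real.sq_sqrt (by norm_num : (0:ℝ) ≤ 2)).symm
  have hsk : ((Real.sqrt k : ℝ):ℂ) ≠ 0 := by simp [Real.sqrt_ne_zero', hk]
  have hsx : ((Real.sqrt x : ℝ):ℂ) ≠ 0 := by simp [Real.sqrt_ne_zero', hx]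
  have hs2 : ((Real.sqrt 2 : ℝ):ℂ) ≠ 0 := by
    simp [Real.sqrt_ne_zero']
  have hsp : ((Real.sqrt π : ℝ):ℂ) ≠ 0 := by simp [Real.sqrt_ne_zero', Real.pi_pos]
  have hfa : (((2*r+2).factorial:ℕ) : ℂ) = 2*((r:ℂ)+1) * (((2*r+1).factorial:ℕ):ℂ) := by
    rw [show 2*r+2 = (2*r+1)+1 by ring, Nat.factorial_succ]
    push_cast; ring
  have hf1 : (((2*r+1).factorial:ℕ) : ℂ) ≠ 0 := by exact_mod_cast (Nat.factorial_pos _).ne'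
  have hf2 : ((r.factorial:ℕ) : ℂ) ≠ 0 := by exact_mod_cast (Nat.factorial_pos _).ne'
  have hr1 : ((r:ℂ)+1) ≠ 0 := by exact_mod_cast Nat.cast_add_one_ne_zero (R := ℂ) r
  have hfb : (((r+1).factorial:ℕ) : ℂ) = ((r:ℂ)+1) * ((r.factorial:ℕ):ℂ) := by
    rw [Nat.factorial_succ]; push_cast; ring
  have hd1 : ((4:ℂ)^(r+1) * (((r+1).factorial:ℕ):ℂ)) ≠ 0 :=
    mul_ne_zero (pow_ne_zero _ (by norm_num)) (by exact_mod_cast (Nat.factorial_pos _).ne')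
  have hd2 : ((2:ℂ) * 4^r) ≠ 0 :=
    mul_ne_zero two_ne_zero (pow_ne_zero _ (by norm_num))
  have hD : ((k:ℂ)^r * ((r.factorial:ℕ):ℂ)) *
      (((Real.sqrt π : ℝ):ℂ) * (((2*r+2).factorial:ℕ):ℂ) / ((4:ℂ)^(r+1) * (((r+1).factorial:ℕ):ℂ)))
      = ((Real.sqrt π : ℝ):ℂ) * (k:ℂ)^r * (((2*r+1).factorial:ℕ):ℂ) / (2*4^r) := by
    rw [← mul_div_assoc, div_eq_div_iff hd1 hd2, hfa, hfb, pow_succ]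
    ring
  rw [hD, div_div_eq_mul_div]
  have h44 : (4:ℂ) = ((Real.sqrt 2 : ℝ):ℂ)^4 := by
    rw [show (4:ℂ) = 2^2 by norm_num, h22]; ring
  push_cast
  rw [hkk, hxx, h44, h22]
  have hk4 : ((Real.sqrt π : ℝ):ℂ) * (((Real.sqrt k:ℝ):ℂ)^2)^r * (((2*r+1).factorial:ℕ):ℂ) ≠ 0 :=
    mul_ne_zero (mul_ne_zero hsp (pow_ne_zero _ (pow_ne_zero _ hsk))) hf1
  field_simp
  rw [div_pow, div_pow]
  field_simp
  ring
end

section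
/- Let k > 0 and α ∈ ℝ. Then for all x > 0, sinh(αx/√k) = α √(πx/(2k)) · S^k_{−k/2, −α²}(x). -/
open Complex Real

lemma gammaHalf (r : ℕ) : Complex.Gamma ((r:ℂ) + 3/2) =
    ((Real.sqrt π * (2*r+1).factorial / (4^r * r.factorial * 2) : ℝ) : ℂ) := by
  induction r with
  | zero =>
    have h : ((0:ℕ):ℂ) + 3/2 = (1/2 : ℂ) + 1 := by norm_num
    rw [h, Complex.Gamma_add_one _ (by norm_num)]
    have h2 : (1/2 : ℂ) = ((1/2 : ℝ) : ℂ) := by norm_num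
    rw [h2, Complex.Gamma_ofReal, Real.Gamma_one_half_eq]
    simp [Nat.factorial]
    ring
  | succ n ih =>
    have h : ((n+1:ℕ):ℂ) + 3/2 = ((n:ℂ) + 3/2) + 1 := by push_cast; ring
    rw [h, Complex.Gamma_add_one _ (by
      intro hc
      have h3 : ((n:ℂ) + 3/2).re = 0 := by rw [hc]; simp
      simp [Complex.add_re] at h3
      nlinarith [Nat.cast_nonneg (α := ℝ) n]), ih]
    have hfac : (2*(n+1)+1).factorial = (2*n+3) * ((2*n+2) * (2*n+1).factorial) := by
      have h4 : 2*(n+1)+1 = (2*n+2)+1 := by ring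
      rw [h4, Nat.factorial_succ, Nat.factorial_succ]
    have key : ((n:ℝ)+3/2) * (Real.sqrt π * (2*n+1).factorial / (4^n * n.factorial * 2))
        = Real.sqrt π * (2*(n+1)+1).factorial / (4^(n+1) * (n+1).factorial * 2) := by
      have hA : ((2*(n+1)+1).factorial : ℝ) = (2*n+3)*((2*n+2)*(2*n+1).factorial) := by
        rw [hfac]; push_cast; ring
      have hF : (((n+1).factorial : ℕ) : ℝ) = ((n:ℝ)+1)*n.factorial := by
        rw [Nat.factorial_succ]; push_cast; ring
      rw [hA, hF]
      have h4 : (4:ℝ)^n ≠ 0 := by positivity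
      have h5 : ((n.factorial : ℝ)) ≠ 0 := by positivity
      have h6 : ((n:ℝ)+1) ≠ 0 := by positivity
      field_simp
      ring
    rw [← key]
    push_cast
    ring

lemma kGamma_eq (k : ℝ) (hk : 0 < k) (r : ℕ) :
    kGamma k ((r : ℂ) * (k : ℂ) + (-((k:ℂ)/2)) + 3 * (k : ℂ) / 2) = ((k^r * r.factorial : ℝ) : ℂ) := by
  have hk0 : (k : ℂ) ≠ 0 := by exact_mod_cast hk.ne'
  have harg : (r : ℂ) * (k : ℂ) + (-((k:ℂ)/2)) + 3 * (k : ℂ) / 2 = ((r:ℂ)+1) * k := by ring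
  rw [harg, kGamma]
  rw [mul_div_assoc, div_self hk0, mul_one]
  rw [add_sub_cancel_right, Complex.Gamma_nat_eq_factorial]
  rw [Complex.cpow_natCast]
  push_cast
  ring

lemma cpow_eq (k x : ℝ) (hk : 0 < k) (hx : 0 < x) (r : ℕ) :
    ((x:ℂ)/2) ^ (2 * (r : ℂ) + (-((k:ℂ)/2)) / (k:ℂ) + 1) = (((x/2)^(2*r) * Real.sqrt (x/2) : ℝ) : ℂ) := by
  have hk0 : (k : ℂ) ≠ 0 := by exact_mod_cast hk.ne'
  have hexp : 2 * (r : ℂ) + (-((k:ℂ)/2)) / (k:ℂ) + 1 = ((2*r : ℕ) : ℂ) + (1/2 : ℂ) := by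
    push_cast
    field_simp
    ring
  have hb : ((x:ℂ)/2) ≠ 0 := by
    simp only [div_ne_zero_iff]
    exact ⟨by exact_mod_cast hx.ne', by norm_num⟩
  have h2 : ((x:ℂ)/2) = (((x/2 : ℝ)) : ℂ) := by push_cast; ring
  rw [hexp, Complex.cpow_add _ _ hb, Complex.cpow_natCast, h2,
    show (1/2 : ℂ) = (((1/2 : ℝ)):ℂ) by norm_num, ← Complex.ofReal_cpow (by positivity),
    ← Real.sqrt_eq_rpow]
  push_cast
  ring

lemma term_real (k α x : ℝ) (hk : 0 < k) (hx : 0 < x) (r : ℕ) :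
    α * Real.sqrt (π*x/(2*k)) *
      ((α^2)^r / (k^r * r.factorial * (Real.sqrt π * (2*r+1).factorial / (4^r * r.factorial * 2))) *
        ((x/2)^(2*r) * Real.sqrt (x/2)))
    = (α*x/Real.sqrt k)^(2*r+1) / (2*r+1).factorial := by
  have hsk : 0 < Real.sqrt k := Real.sqrt_pos.mpr hk
  have hsp : 0 < Real.sqrt π := Real.sqrt_pos.mpr pi_pos
  have e12 : Real.sqrt (π*x/(2*k)) * Real.sqrt (x/2) = x * Real.sqrt π / (2 * Real.sqrt k) := by
    rw [← Real.sqrt_mul (by positivity)]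
    rw [show π*x/(2*k) * (x/2) = (x/2)^2 * (π/k) by ring]
    rw [Real.sqrt_mul (by positivity), Real.sqrt_sq (by positivity),
      Real.sqrt_div (le_of_lt pi_pos)]
    ring
  have hk2 : k ^ r = (Real.sqrt k * Real.sqrt k) ^ r := by rw [Real.mul_self_sqrt hk.le]
  have hf1 : ((r.factorial : ℕ) : ℝ) ≠ 0 := by positivity
  have hf2 : (((2*r+1).factorial : ℕ) : ℝ) ≠ 0 := by positivity
  calc α * Real.sqrt (π*x/(2*k)) *
      ((α^2)^r / (k^r * r.factorial * (Real.sqrt π * (2*r+1).factorial / (4^r * r.factorial * 2))) *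
        ((x/2)^(2*r) * Real.sqrt (x/2)))
      = (Real.sqrt (π*x/(2*k)) * Real.sqrt (x/2)) *
        (α * ((α^2)^r / (k^r * r.factorial * (Real.sqrt π * (2*r+1).factorial / (4^r * r.factorial * 2))) *
          (x/2)^(2*r))) := by ring
    _ = (x * Real.sqrt π / (2 * Real.sqrt k)) *
        (α * ((α^2)^r / (k^r * r.factorial * (Real.sqrt π * (2*r+1).factorial / (4^r * r.factorial * 2))) *
          (x/2)^(2*r))) := by rw [e12]
    _ = (α*x/Real.sqrt k)^(2*r+1) / (2*r+1).factorial := by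
        have hkr : (Real.sqrt k)^(2*r+1) = k^r * Real.sqrt k := by
          rw [pow_succ, pow_mul, Real.sq_sqrt hk.le]
        have h4 : (4:ℝ)^r = 2^(2*r) := by rw [pow_mul]; norm_num
        field_simp
        rw [div_pow (x * α) (Real.sqrt k), hkr, h4, div_pow]
        field_simp
        ring

theorem sinh_eq_kStruve (k : ℝ) (hk : 0 < k) (α : ℝ) (x : ℝ) (hx : 0 < x) :
    ((Real.sinh (α * x / Real.sqrt k) : ℝ) : ℂ) =
      (α : ℂ) * ((Real.sqrt (π * x / (2 * k)) : ℝ) : ℂ) *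
        kStruve k (-((k : ℂ) / 2)) (-(α : ℂ) ^ 2) x := by
  rw [Complex.ofReal_sinh, Complex.sinh_eq_tsum, kStruve, ← tsum_mul_left]
  refine tsum_congr fun r => ?_
  rw [kGamma_eq k hk r, gammaHalf r, cpow_eq k x hk hx r, neg_neg]
  have h := term_real k α x hk hx r
  have h' := congrArg (Complex.ofReal) h
  push_cast at h' ⊢
  linear_combination -h'
end
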